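/- Let a ≥ 1/2 and let f : [-1,1]² → ℂ be a bounded Borel function that is continuous at (0,0) with f(0,0) = 0. Then ∫_{-1}^{u} f(v,s)/(v² + s²)^a dv = o(⟨|s|⟩^{1-2a}) as s → 0, uniformly in u ∈ [-1,1], where ⟨t⟩^b := (t^b - 1)/(-b) + 1 if b < 0, ⟨t⟩^0 := 1 - log t, and ⟨t⟩^b := 1 if b > 0, for t ∈ (0,1]. -/

import Mathlib

open Real Filter intervalIntegral MeasureTheory

/-- The weight function `⟨t⟩^b` from the paper. -/
noncomputable def angBra (t b : ℝ) : ℝ :=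
  if b < 0 then (t ^ b - 1) / (-b) + 1 else if b = 0 then 1 - Real.log t else 1

lemma angBra_ge_one {t b : ℝ} (ht0 : 0 < t) (ht1 : t ≤ 1) (hb : b ≤ 0) :
    1 ≤ angBra t b := by
  unfold angBra
  rcases lt_or_eq_of_le hb with h | h
  · rw [if_pos h]
    have h1 : 1 ≤ t ^ b := Real.one_le_rpow_of_pos_of_le_one_of_nonpos ht0 ht1 h.le
    have : 0 ≤ (t ^ b - 1) / (-b) := div_nonneg (by linarith) (by linarith)
    linarith
  · rw [if_neg (by simp [h]), if_pos h]
    have := Real.log_nonpos ht0.le ht1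
    linarith

/-- continuity/integrability of the kernel -/
lemma kernel_intble (a t : ℝ) (ht : t ≠ 0) (c d : ℝ) :
    IntervalIntegrable (fun v : ℝ => ((v ^ 2 + t ^ 2) ^ a)⁻¹) MeasureTheory.volume c d := by
  apply ContinuousOn.intervalIntegrable
  apply Continuous.continuousOn
  have hpos : ∀ v : ℝ, 0 < v ^ 2 + t ^ 2 := fun v => by positivity
  apply Continuous.inv₀
  · exact (continuous_pow 2 |>.add continuous_const).rpow_const fun v => Or.inl (hpos v).ne'
  · intro v; exact (Real.rpow_pos_of_pos (hpos v) a).ne'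

lemma kernel_bound (a t : ℝ) (ha : 1/2 ≤ a) (ht0 : 0 < t) (ht1 : t ≤ 1) :
    ∫ v in (-1:ℝ)..1, ((v ^ 2 + t ^ 2) ^ a)⁻¹ ≤ (4 * a + 2) * angBra t (1 - 2 * a) := by
  set A := angBra t (1 - 2 * a) with hA
  set g : ℝ → ℝ := fun v => ((v ^ 2 + t ^ 2) ^ a)⁻¹ with hg
  have hb : 1 - 2 * a ≤ 0 := by linarith
  have hA1 : 1 ≤ A := angBra_ge_one ht0 ht1 hb
  have hgnn : ∀ v, 0 ≤ g v := fun v => by positivity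
  -- symmetry: ∫_{-1}^0 g = ∫_0^1 g
  have hsym : ∫ v in (-1:ℝ)..0, g v = ∫ v in (0:ℝ)..1, g v := by
    have := intervalIntegral.integral_comp_neg (a := (0:ℝ)) (b := 1) g
    simp only [neg_zero, neg_one_mul] at this
    rw [← this]
    congr 1
    ext v
    simp [hg, neg_pow]
  have hsplit : ∫ v in (-1:ℝ)..1, g v = (∫ v in (-1:ℝ)..0, g v) + ∫ v in (0:ℝ)..1, g v :=
    (intervalIntegral.integral_add_adjacent_intervals (kernel_intble a t ht0.ne' _ _)
      (kernel_intble a t ht0.ne' _ _)).symm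
  -- bound ∫_0^1
  have hsplit2 : ∫ v in (0:ℝ)..1, g v = (∫ v in (0:ℝ)..t, g v) + ∫ v in t..1, g v :=
    (intervalIntegral.integral_add_adjacent_intervals (kernel_intble a t ht0.ne' _ _)
      (kernel_intble a t ht0.ne' _ _)).symm
  have h1 : ∫ v in (0:ℝ)..t, g v ≤ t ^ (1 - 2 * a) := by
    have hbd : ∀ v ∈ Set.Icc (0:ℝ) t, g v ≤ t ^ (-(2 * a)) := by
      intro v hv
      have h2 : (t ^ 2 : ℝ) ^ a ≤ (v ^ 2 + t ^ 2) ^ a :=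
        Real.rpow_le_rpow (by positivity) (by nlinarith) (by linarith)
      have h3 : (t ^ 2 : ℝ) ^ a = t ^ (2 * a) := by
        rw [← Real.rpow_natCast t 2, ← Real.rpow_mul ht0.le]; norm_num
      rw [Real.rpow_neg ht0.le]
      apply inv_anti₀
      · rw [← h3]; positivity
      · rw [← h3]; exact h2
    calc ∫ v in (0:ℝ)..t, g v ≤ ∫ v in (0:ℝ)..t, t ^ (-(2 * a)) := by
          apply intervalIntegral.integral_mono_on ht0.le (kernel_intble a t ht0.ne' _ _)
            intervalIntegrable_const hbd
      _ = t * t ^ (-(2 * a)) := by simp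
      _ = t ^ (1 - 2 * a) := by
          nth_rewrite 1 [← Real.rpow_one t]
          rw [← Real.rpow_add ht0]
          ring_nf
  have h2 : ∫ v in t..1, g v ≤ A - 1 := by
    have hbd : ∀ v ∈ Set.Icc t 1, g v ≤ v ^ (-(2 * a)) := by
      intro v hv
      have hv0 : 0 < v := lt_of_lt_of_le ht0 hv.1
      have h2 : (v ^ 2 : ℝ) ^ a ≤ (v ^ 2 + t ^ 2) ^ a :=
        Real.rpow_le_rpow (by positivity) (by nlinarith) (by linarith)
      have h3 : (v ^ 2 : ℝ) ^ a = v ^ (2 * a) := by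
        rw [← Real.rpow_natCast v 2, ← Real.rpow_mul hv0.le]; norm_num
      rw [Real.rpow_neg hv0.le]
      apply inv_anti₀
      · rw [← h3]; positivity
      · rw [← h3]; exact h2
    have hint : IntervalIntegrable (fun v : ℝ => v ^ (-(2*a))) MeasureTheory.volume t 1 := by
      apply intervalIntegral.intervalIntegrable_rpow
      right
      rw [Set.uIcc_of_le ht1]
      intro h; exact absurd h.1 (by linarith)
    have step : ∫ v in t..1, g v ≤ ∫ v in t..1, v ^ (-(2*a)) :=
      intervalIntegral.integral_mono_on ht1 (kernel_intble a t ht0.ne' _ _) hint hbd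
    have hval : ∫ v in t..1, (v:ℝ) ^ (-(2*a)) = A - 1 := by
      rcases lt_or_eq_of_le hb with h | h
      · rw [integral_rpow (Or.inr ⟨by intro hc; rw [neg_inj] at hc; linarith,
          by rw [Set.uIcc_of_le ht1]; intro hm; exact absurd hm.1 (by linarith)⟩)]
        have he : -(2*a) + 1 = 1 - 2*a := by ring
        rw [he, Real.one_rpow, hA]
        unfold angBra
        rw [if_pos h]
        rw [add_sub_cancel_right, div_neg]
        ring
      · have ha2 : a = 1/2 := by linarith
        have : ∀ v : ℝ, v ∈ Set.uIcc t 1 → v ^ (-(2*a)) = v⁻¹ := by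
          intro v hv
          rw [Set.uIcc_of_le ht1] at hv
          have hv0 : 0 < v := lt_of_lt_of_le ht0 hv.1
          rw [ha2]; norm_num
          rw [Real.rpow_neg_one]
        rw [intervalIntegral.integral_congr fun v hv => this v hv]
        rw [integral_inv (by rw [Set.uIcc_of_le ht1]; intro hm; exact absurd hm.1 (by linarith))]
        rw [hA]
        unfold angBra
        rw [if_neg (by rw [h]; simp), if_pos h]
        rw [one_div, Real.log_inv]
        ring
    rw [← hval]; exact step
  have ht2a : t ^ (1 - 2 * a) ≤ 2 * a * A := by
    rcases lt_or_eq_of_le hb with h | h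
    · have hne : (-(1 - 2*a)) ≠ 0 := by intro hc; apply absurd h; simp at hc; linarith
      have hAm : A - 1 = (t ^ (1 - 2*a) - 1) / (-(1 - 2*a)) := by
        rw [hA]; unfold angBra; rw [if_pos h]; ring
      have hAdef : t ^ (1 - 2*a) = (A - 1) * (-(1 - 2*a)) + 1 := by
        rw [hAm, div_mul_cancel₀ _ hne]; ring
      rw [hAdef]
      nlinarith
    · rw [h, Real.rpow_zero]
      nlinarith
  have hApos : 0 < A := by linarith
  calc ∫ v in (-1:ℝ)..1, g v = (∫ v in (-1:ℝ)..0, g v) + ∫ v in (0:ℝ)..1, g v := hsplit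
    _ = 2 * ∫ v in (0:ℝ)..1, g v := by rw [hsym]; ring
    _ = 2 * ((∫ v in (0:ℝ)..t, g v) + ∫ v in t..1, g v) := by rw [hsplit2]
    _ ≤ 2 * (t ^ (1 - 2*a) + (A - 1)) := by linarith
    _ ≤ 2 * (2 * a * A + (A - 1)) := by linarith
    _ ≤ (4 * a + 2) * A := by nlinarith

lemma angBra_tendsto {b : ℝ} (hb : b ≤ 0) :
    Tendsto (fun t => angBra t b) (nhdsWithin 0 (Set.Ioi 0)) atTop := by
  rcases lt_or_eq_of_le hb with h | h
  · have h1 : Tendsto (fun t : ℝ => t ^ b) (nhdsWithin 0 (Set.Ioi 0)) atTop := by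
      have hlog : Tendsto Real.log (nhdsWithin 0 (Set.Ioi 0)) atBot :=
        Real.tendsto_log_nhdsGT_zero
      have hmul : Tendsto (fun t : ℝ => b * Real.log t) (nhdsWithin 0 (Set.Ioi 0)) atTop := by
        exact (tendsto_const_mul_atTop_of_neg h).2 hlog
      have hexp : Tendsto (fun t : ℝ => Real.exp (b * Real.log t)) (nhdsWithin 0 (Set.Ioi 0)) atTop :=
        Real.tendsto_exp_atTop.comp hmul
      refine hexp.congr' ?_
      filter_upwards [self_mem_nhdsWithin] with t ht
      rw [Real.rpow_def_of_pos ht, mul_comm]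
    have : Tendsto (fun t : ℝ => (t ^ b - 1) / (-b) + 1) (nhdsWithin 0 (Set.Ioi 0)) atTop := by
      apply tendsto_atTop_add_const_right
      exact (tendsto_atTop_add_const_right _ (-1) h1).atTop_div_const (by linarith)
    refine this.congr fun t => ?_
    simp [angBra, h, sub_eq_add_neg]
  · have hlog : Tendsto Real.log (nhdsWithin 0 (Set.Ioi 0)) atBot :=
      Real.tendsto_log_nhdsGT_zero
    have : Tendsto (fun t : ℝ => 1 - Real.log t) (nhdsWithin 0 (Set.Ioi 0)) atTop := by
      simpa [sub_eq_add_neg] using tendsto_atTop_add_const_left _ 1 (tendsto_neg_atTop_iff.mpr hlog)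
    refine this.congr fun t => ?_
    simp [angBra, ← h]

theorem stmt3 (a : ℝ) (ha : 1/2 ≤ a) (f : ℝ × ℝ → ℂ)
    (hmeas : Measurable f)
    (hbd : ∃ M : ℝ, ∀ p ∈ Set.Icc ((-1:ℝ), (-1:ℝ)) ((1:ℝ), (1:ℝ)), ‖f p‖ ≤ M)
    (hcont : ContinuousWithinAt f (Set.Icc ((-1:ℝ), (-1:ℝ)) ((1:ℝ), (1:ℝ))) (0, 0))
    (h0 : f (0, 0) = 0) :
    ∀ ε > 0, ∃ δ > 0, ∀ s : ℝ, 0 < |s| → |s| < δ → ∀ u ∈ Set.Icc (-1:ℝ) 1,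
      ‖∫ v in (-1:ℝ)..u, f (v, s) / ((((v^2 + s^2) ^ a : ℝ)) : ℂ)‖ ≤
        ε * angBra |s| (1 - 2*a) := by
  intro ε hε
  obtain ⟨M, hM⟩ := hbd
  have h00 : ((0:ℝ), (0:ℝ)) ∈ Set.Icc ((-1:ℝ), (-1:ℝ)) ((1:ℝ), (1:ℝ)) := by
    constructor <;> constructor <;> norm_num
  have hM0 : 0 ≤ M := le_trans (norm_nonneg _) (hM _ h00)
  have hb : 1 - 2 * a ≤ 0 := by linarith
  set ε' := ε / (2 * (4 * a + 2)) with hε'def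
  have hε' : 0 < ε' := by apply div_pos hε; linarith
  rw [ContinuousWithinAt, h0, Metric.tendsto_nhdsWithin_nhds] at hcont
  obtain ⟨r, hr, hcont⟩ := hcont ε' hε'
  set r0 := min (r/2) 1 with hr0def
  have hr0 : 0 < r0 := lt_min (by linarith) one_pos
  have hr01 : r0 ≤ 1 := min_le_right _ _
  have hr0r : r0 < r := lt_of_le_of_lt (min_le_left _ _) (by linarith)
  set c := M * r0 ^ (-(2 * a)) with hcdef
  have hc0 : 0 ≤ c := by positivity
  have hev : ∀ᶠ t in nhdsWithin (0:ℝ) (Set.Ioi 0), 4 * c / ε ≤ angBra t (1 - 2*a) :=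
    (angBra_tendsto hb).eventually (eventually_ge_atTop _)
  rw [eventually_nhdsWithin_iff, Metric.eventually_nhds_iff] at hev
  obtain ⟨δ₂, hδ₂, hev⟩ := hev
  refine ⟨min δ₂ r0, lt_min hδ₂ hr0, ?_⟩
  intro s hsabs hsδ u hu
  have hs0 : s ≠ 0 := fun h => by simp [h] at hsabs
  have htδ₂ : |s| < δ₂ := lt_of_lt_of_le hsδ (min_le_left _ _)
  have htr0 : |s| < r0 := lt_of_lt_of_le hsδ (min_le_right _ _)
  have ht1 : |s| ≤ 1 := le_trans htr0.le hr01
  have hsle : -1 ≤ s ∧ s ≤ 1 := abs_le.1 ht1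
  set A := angBra |s| (1 - 2*a) with hAdef
  have hA1 : 1 ≤ A := angBra_ge_one hsabs ht1 hb
  have hAC : 4 * c / ε ≤ A := by
    apply hev (y := |s|) ?_ hsabs
    rw [Real.dist_eq, sub_zero, abs_abs]; exact htδ₂
  -- the kernel
  set k : ℝ → ℝ := fun v => ((v^2 + s^2) ^ a)⁻¹ with hkdef
  have hkeq : k = fun v => ((v^2 + |s|^2) ^ a)⁻¹ := by funext v; rw [sq_abs]
  have hkint : ∀ c' d' : ℝ, IntervalIntegrable k MeasureTheory.volume c' d' := fun c' d' => by
    rw [hkeq]; exact kernel_intble a |s| (abs_ne_zero.2 hs0) c' d'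
  have hknn : ∀ v, 0 ≤ k v := fun v => by
    have : (0:ℝ) < v^2 + s^2 := by positivity
    positivity
  have hK : ∫ v in (-1:ℝ)..1, k v ≤ (4*a+2) * A := by
    rw [hkeq]; exact kernel_bound a |s| ha (abs_pos.2 hs0) ht1
  have hu1 : u ≤ 1 := hu.2
  have hum1 : -1 ≤ u := hu.1
  set F : ℝ → ℂ := fun v => f (v, s) / (((v^2 + s^2) ^ a : ℝ) : ℂ) with hFdef
  have hFnorm : ∀ v, ‖F v‖ = ‖f (v, s)‖ * k v := by
    intro v
    have hpos : (0:ℝ) < (v^2+s^2)^a := Real.rpow_pos_of_pos (by positivity) a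
    rw [hFdef]
    simp only [div_eq_mul_inv, norm_mul, norm_inv, Complex.norm_real, Real.norm_eq_abs,
      abs_of_pos hpos]
    rfl
  have hFmeas : Measurable F := by
    apply Measurable.div
    · exact hmeas.comp (measurable_id.prodMk measurable_const)
    · apply Complex.measurable_ofReal.comp
      apply Continuous.measurable
      exact ((continuous_pow 2).add continuous_const).rpow_const
        fun v => Or.inl (by have : (0:ℝ) < v^2 + s^2 := (by positivity); exact this.ne')
  have hfbound : ∀ v ∈ Set.Icc (-1:ℝ) 1, ‖f (v, s)‖ ≤ M := by
    intro v hv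
    exact hM _ ⟨⟨hv.1, hsle.1⟩, ⟨hv.2, hsle.2⟩⟩
  have key : ∀ cc dd : ℝ, -1 ≤ cc → dd ≤ 1 → cc ≤ dd →
      IntervalIntegrable (fun v => ‖F v‖) MeasureTheory.volume cc dd := by
    intro cc dd h1 h2 h3
    apply IntervalIntegrable.mono_fun ((hkint cc dd).const_mul M)
      (hFmeas.norm).aestronglyMeasurable
    filter_upwards [ae_restrict_mem measurableSet_uIoc] with v hv
    rw [Set.uIoc_of_le h3] at hv
    have hvI : v ∈ Set.Icc (-1:ℝ) 1 := ⟨le_trans h1 hv.1.le, le_trans hv.2 h2⟩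
    rw [norm_norm, Real.norm_eq_abs, abs_of_nonneg (mul_nonneg hM0 (hknn v)), hFnorm]
    exact mul_le_mul_of_nonneg_right (hfbound v hvI) (hknn v)
  have hptwise : ∀ v ∈ Set.Icc (-1:ℝ) 1, ‖F v‖ ≤ ε' * k v + c := by
    intro v hv
    rw [hFnorm]
    rcases le_or_gt |v| r0 with hcase | hcase
    · have hdist : dist ((v, s) : ℝ × ℝ) ((0:ℝ), (0:ℝ)) < r := by
        rw [Prod.dist_eq]
        apply max_lt
        · rw [Real.dist_eq, sub_zero]; exact lt_of_le_of_lt hcase hr0r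
        · rw [Real.dist_eq, sub_zero]; exact lt_trans htr0 hr0r
      have hmem : ((v:ℝ), s) ∈ Set.Icc ((-1:ℝ), (-1:ℝ)) ((1:ℝ), (1:ℝ)) :=
        ⟨⟨hv.1, hsle.1⟩, ⟨hv.2, hsle.2⟩⟩
      have hsmall := hcont hmem hdist
      rw [dist_zero_right] at hsmall
      have h5 : ‖f (v,s)‖ * k v ≤ ε' * k v := mul_le_mul_of_nonneg_right hsmall.le (hknn v)
      linarith
    · have h1 : ‖f (v,s)‖ ≤ M := hfbound v hv
      have h2 : k v ≤ r0 ^ (-(2*a)) := by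
        have hle : ((r0^2 : ℝ))^a ≤ (v^2+s^2)^a := by
          apply Real.rpow_le_rpow (by positivity) ?_ (by linarith)
          nlinarith [sq_abs v, sq_nonneg s, hcase.le, hr0.le, abs_nonneg v]
        have h3 : ((r0^2:ℝ))^a = r0^(2*a) := by
          rw [← Real.rpow_natCast r0 2, ← Real.rpow_mul hr0.le]; norm_num
        rw [Real.rpow_neg hr0.le]
        apply inv_anti₀
        · have : (0:ℝ) < v^2 + s^2 := by positivity
          positivity
        · rw [← h3]; exact hle
      have h4 : ‖f (v,s)‖ * k v ≤ c := by
        rw [hcdef]; exact mul_le_mul h1 h2 (hknn v) hM0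
      have h5 : 0 ≤ ε' * k v := mul_nonneg hε'.le (hknn v)
      linarith
  calc ‖∫ v in (-1:ℝ)..u, F v‖ ≤ ∫ v in (-1:ℝ)..u, ‖F v‖ :=
        intervalIntegral.norm_integral_le_integral_norm hum1
    _ ≤ ∫ v in (-1:ℝ)..1, ‖F v‖ := by
        apply intervalIntegral.integral_mono_interval (le_refl (-1:ℝ)) hum1 hu1 ?_
          (key (-1) 1 le_rfl le_rfl (by norm_num))
        filter_upwards with v using norm_nonneg _
    _ ≤ ∫ v in (-1:ℝ)..1, (ε' * k v + c) := by
        apply intervalIntegral.integral_mono_on (by norm_num)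
          (key (-1) 1 le_rfl le_rfl (by norm_num))
          (((hkint _ _).const_mul ε').add intervalIntegrable_const) hptwise
    _ = ε' * (∫ v in (-1:ℝ)..1, k v) + 2 * c := by
        rw [intervalIntegral.integral_add ((hkint _ _).const_mul ε') intervalIntegrable_const,
          intervalIntegral.integral_const_mul, intervalIntegral.integral_const]
        norm_num
    _ ≤ ε' * ((4*a+2) * A) + 2 * c := by nlinarith [hε'.le, hK]
    _ ≤ ε * A := by
        have h1 : ε' * ((4*a+2)*A) = ε/2 * A := by
          rw [hε'def]; field_simp
        have h2 : 2*c ≤ ε/2 * A := by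
          rw [div_le_iff₀ hε] at hAC
          linarith
        linarith
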